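/- arXiv:2107.06091 — 2 statements merged into one kernel-verified Lean document; each statement's English description precedes it below -/
import Mathlib

section
/- Let S be a real symmetric positive definite n×n matrix. Let λ_min and λ_max be its smallest and largest eigenvalues, let λ* ∈ {λ_min, λ_max} be one with ℓ(λ*) = min(ℓ(λ_min), ℓ(λ_max)), and let d* be a unit eigenvector of S for λ*. Then Σ*_1 = I_n + (λ* − 1) d* (d*)ᵀ minimizes D' over L_{n,1}: for every Σ ∈ L_{n,1}, D'(Σ*_1) ≤ D'(Σ). -/
open Matrix

noncomputable def ell (x : ℝ) : ℝ := Real.log x - x + 1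

noncomputable def Dp {n : ℕ} (S A : Matrix (Fin n) (Fin n) ℝ) : ℝ :=
  Real.log A.det + (S * A⁻¹).trace

def Lnk (n k : ℕ) : Set (Matrix (Fin n) (Fin n) ℝ) :=
  {M | ∃ (α : Fin k → ℝ) (d : Fin k → Fin n → ℝ),
    (∀ i, 0 < α i) ∧ (∀ i j, d i ⬝ᵥ d j = if i = j then (1 : ℝ) else 0) ∧
    M = 1 + ∑ i, (α i - 1) • Matrix.vecMulVec (d i) (d i)}

/-- ℓ is nonpositive on positives. -/
lemma ell_nonpos {x : ℝ} (hx : 0 < x) : ell x ≤ 0 := by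
  have := Real.log_le_sub_one_of_pos hx
  unfold ell; linarith

/-- ℓ is monotone on (0,1]. -/
lemma ell_mono {a b : ℝ} (ha : 0 < a) (hab : a ≤ b) (hb1 : b ≤ 1) : ell a ≤ ell b := by
  have hb : 0 < b := lt_of_lt_of_le ha hab
  have h1 : 1 - (b / a)⁻¹ ≤ Real.log (b / a) :=
    Real.one_sub_inv_le_log_of_pos (div_pos hb ha)
  have h2 : Real.log (b / a) = Real.log b - Real.log a := Real.log_div hb.ne' ha.ne'
  have h3 : (b / a)⁻¹ = a / b := by field_simp
  have h4 : 1 - a / b = (b - a) / b := by field_simp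
  have h5 : (b - a) / b ≥ b - a := by
    rw [ge_iff_le, le_div_iff₀ hb]
    nlinarith
  unfold ell; rw [h2, h3, h4] at h1; linarith

/-- ℓ is antitone on [1,∞). -/
lemma ell_anti {a b : ℝ} (ha : 1 ≤ a) (hab : a ≤ b) : ell b ≤ ell a := by
  have ha0 : 0 < a := lt_of_lt_of_le one_pos ha
  have hb : 0 < b := lt_of_lt_of_le ha0 hab
  have h1 : 1 - (a / b)⁻¹ ≤ Real.log (a / b) :=
    Real.one_sub_inv_le_log_of_pos (div_pos ha0 hb)
  have h2 : Real.log (a / b) = Real.log a - Real.log b := Real.log_div ha0.ne' hb.ne'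
  have h3 : (a / b)⁻¹ = b / a := by field_simp
  have h4 : 1 - b / a = (a - b) / a := by field_simp
  have h5 : (a - b) / a ≥ a - b := by
    rw [ge_iff_le, le_div_iff₀ ha0]
    nlinarith
  unfold ell; rw [h2, h3, h4] at h1; linarith

lemma smul_vecMulVec' {n : ℕ} (c : ℝ) (u v : Fin n → ℝ) :
    c • Matrix.vecMulVec u v = Matrix.vecMulVec (c • u) v := by
  ext i j
  simp [Matrix.vecMulVec_apply, mul_assoc]

lemma vecMulVec_mul_vecMulVec {n : ℕ} (u v w x : Fin n → ℝ) :
    Matrix.vecMulVec u v * Matrix.vecMulVec w x = (v ⬝ᵥ w) • Matrix.vecMulVec u x := by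
  ext i j
  simp only [Matrix.mul_apply, Matrix.vecMulVec_apply, Matrix.smul_apply, dotProduct,
    Finset.sum_mul, smul_eq_mul]
  apply Finset.sum_congr rfl
  intros; ring

lemma det_one_add_smul_vecMulVec {n : ℕ} (c : ℝ) (d : Fin n → ℝ) :
    (1 + c • Matrix.vecMulVec d d).det = 1 + c * (d ⬝ᵥ d) := by
  rw [smul_vecMulVec', Matrix.vecMulVec_eq (Fin 1), Matrix.det_one_add_replicateCol_mul_replicateRow,
    dotProduct_smul, smul_eq_mul]

lemma trace_mul_vecMulVec {n : ℕ} (S : Matrix (Fin n) (Fin n) ℝ) (d : Fin n → ℝ) :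
    (S * Matrix.vecMulVec d d).trace = d ⬝ᵥ (S *ᵥ d) := by
  simp only [Matrix.trace, Matrix.diag, Matrix.mul_apply, Matrix.vecMulVec_apply,
    dotProduct, Matrix.mulVec, Finset.mul_sum]
  apply Finset.sum_congr rfl
  intros
  apply Finset.sum_congr rfl
  intros; ring

lemma inv_one_add_smul_vecMulVec {n : ℕ} {a : ℝ} (ha : 0 < a) {d : Fin n → ℝ}
    (hd : d ⬝ᵥ d = 1) :
    (1 + (a - 1) • Matrix.vecMulVec d d)⁻¹ = 1 + (a⁻¹ - 1) • Matrix.vecMulVec d d := by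
  apply Matrix.inv_eq_right_inv
  have hmul : (1 + (a - 1) • Matrix.vecMulVec d d) * (1 + (a⁻¹ - 1) • Matrix.vecMulVec d d)
      = 1 + ((a - 1) + ((a⁻¹ - 1) + (a⁻¹ - 1) * (a - 1))) • Matrix.vecMulVec d d := by
    simp only [add_mul, mul_add, one_mul, mul_one, Matrix.smul_mul, Matrix.mul_smul,
      vecMulVec_mul_vecMulVec, hd, one_smul, smul_smul, add_smul]
    abel
  rw [hmul]
  have hz : (a - 1) + ((a⁻¹ - 1) + (a⁻¹ - 1) * (a - 1)) = 0 := by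
    field_simp
    ring
  rw [hz, zero_smul, add_zero]

/-- Value of Dp on a rank-one update. -/
lemma Dp_one_add {n : ℕ} (S : Matrix (Fin n) (Fin n) ℝ) {a : ℝ} (ha : 0 < a)
    {d : Fin n → ℝ} (hd : d ⬝ᵥ d = 1) :
    Dp S (1 + (a - 1) • Matrix.vecMulVec d d)
      = Real.log a + (S.trace + (a⁻¹ - 1) * (d ⬝ᵥ (S *ᵥ d))) := by
  unfold Dp
  rw [det_one_add_smul_vecMulVec, hd, inv_one_add_smul_vecMulVec ha hd, mul_add,
    Matrix.trace_add, mul_one, Matrix.mul_smul, Matrix.trace_smul, trace_mul_vecMulVec]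
  simp only [smul_eq_mul]
  rw [mul_one, add_sub_cancel]

/-- Rayleigh quotient bounds from eigenvalue bounds. -/
lemma rayleigh_bounds {n : ℕ} {S : Matrix (Fin n) (Fin n) ℝ} (hS : S.PosDef)
    {lammin lammax : ℝ}
    (hbounds : ∀ μ : ℝ, (∃ w : Fin n → ℝ, w ≠ 0 ∧ S *ᵥ w = μ • w) →
      lammin ≤ μ ∧ μ ≤ lammax)
    {d : Fin n → ℝ} (hd : d ⬝ᵥ d = 1) :
    lammin ≤ d ⬝ᵥ (S *ᵥ d) ∧ d ⬝ᵥ (S *ᵥ d) ≤ lammax := by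
  have hH : S.IsHermitian := hS.1
  have hSymm : Sᵀ = S := by simpa using hH.eq
  constructor
  · -- S - lammin • 1 is PosSemidef
    set A : Matrix (Fin n) (Fin n) ℝ := S - lammin • 1 with hA
    have hAH : A.IsHermitian := by
      simp [Matrix.IsHermitian, hA, Matrix.conjTranspose_sub, Matrix.conjTranspose_smul, hSymm]
    have hpsd : A.PosSemidef := by
      apply hAH.posSemidef_iff_eigenvalues_nonneg.mpr
      intro i
      have hv := hAH.mulVec_eigenvectorBasis i
      have hvne : (⇑(hAH.eigenvectorBasis i) : Fin n → ℝ) ≠ 0 := by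
        have := hAH.eigenvectorBasis.orthonormal.ne_zero i
        intro h
        apply this
        ext j
        exact congrFun h j
      have hSv : S *ᵥ ⇑(hAH.eigenvectorBasis i)
          = (hAH.eigenvalues i + lammin) • ⇑(hAH.eigenvectorBasis i) := by
        have : A *ᵥ ⇑(hAH.eigenvectorBasis i)
            = S *ᵥ ⇑(hAH.eigenvectorBasis i) - lammin • ⇑(hAH.eigenvectorBasis i) := by
          simp [hA, Matrix.sub_mulVec, Matrix.smul_mulVec, Matrix.one_mulVec]
        rw [this] at hv
        rw [sub_eq_iff_eq_add] at hv
        rw [hv, add_smul]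
      have := (hbounds _ ⟨_, hvne, hSv⟩).1
      simp only [Pi.zero_apply]; linarith
    have h0 := hpsd.dotProduct_mulVec_nonneg d
    simp only [star_trivial, hA, Matrix.sub_mulVec, Matrix.smul_mulVec,
      Matrix.one_mulVec, dotProduct_sub, dotProduct_smul, smul_eq_mul, hd] at h0
    linarith
  · set A : Matrix (Fin n) (Fin n) ℝ := lammax • 1 - S with hA
    have hAH : A.IsHermitian := by
      simp [Matrix.IsHermitian, hA, Matrix.conjTranspose_sub, Matrix.conjTranspose_smul, hSymm]
    have hpsd : A.PosSemidef := by
      apply hAH.posSemidef_iff_eigenvalues_nonneg.mpr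
      intro i
      have hv := hAH.mulVec_eigenvectorBasis i
      have hvne : (⇑(hAH.eigenvectorBasis i) : Fin n → ℝ) ≠ 0 := by
        have := hAH.eigenvectorBasis.orthonormal.ne_zero i
        intro h
        apply this
        ext j
        exact congrFun h j
      have hSv : S *ᵥ ⇑(hAH.eigenvectorBasis i)
          = (lammax - hAH.eigenvalues i) • ⇑(hAH.eigenvectorBasis i) := by
        have : A *ᵥ ⇑(hAH.eigenvectorBasis i)
            = lammax • ⇑(hAH.eigenvectorBasis i) - S *ᵥ ⇑(hAH.eigenvectorBasis i) := by
          simp [hA, Matrix.sub_mulVec, Matrix.smul_mulVec, Matrix.one_mulVec]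
        rw [this] at hv
        have : S *ᵥ ⇑(hAH.eigenvectorBasis i)
            = lammax • ⇑(hAH.eigenvectorBasis i) - hAH.eigenvalues i • ⇑(hAH.eigenvectorBasis i) := by
          rw [eq_sub_iff_add_eq, add_comm, ← eq_sub_iff_add_eq]
          exact hv.symm
        rw [this, sub_smul]
      have := (hbounds _ ⟨_, hvne, hSv⟩).2
      simp only [Pi.zero_apply]; linarith
    have h0 := hpsd.dotProduct_mulVec_nonneg d
    simp only [star_trivial, hA, Matrix.sub_mulVec, Matrix.smul_mulVec,
      Matrix.one_mulVec, dotProduct_sub, dotProduct_smul, smul_eq_mul, hd] at h0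
    linarith

theorem stmt_3 {n : ℕ} (S : Matrix (Fin n) (Fin n) ℝ) (hS : S.PosDef)
    (lammin lammax lamstar : ℝ) (dstar : Fin n → ℝ)
    (hminEig : ∃ w : Fin n → ℝ, w ≠ 0 ∧ S *ᵥ w = lammin • w)
    (hmaxEig : ∃ w : Fin n → ℝ, w ≠ 0 ∧ S *ᵥ w = lammax • w)
    (hbounds : ∀ μ : ℝ, (∃ w : Fin n → ℝ, w ≠ 0 ∧ S *ᵥ w = μ • w) →
      lammin ≤ μ ∧ μ ≤ lammax)
    (hstar : lamstar = lammin ∨ lamstar = lammax)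
    (hstarmin : ell lamstar = min (ell lammin) (ell lammax))
    (hd : S *ᵥ dstar = lamstar • dstar) (hdnorm : dstar ⬝ᵥ dstar = 1) :
    ∀ M ∈ Lnk n 1,
      Dp S (1 + (lamstar - 1) • Matrix.vecMulVec dstar dstar) ≤ Dp S M := by
  -- positivity facts
  have hdne : dstar ≠ 0 := by
    intro h
    rw [h] at hdnorm
    simp at hdnorm
  have hstar_pos : 0 < lamstar := by
    have h0 := hS.dotProduct_mulVec_pos hdne
    simp only [star_trivial, hd, dotProduct_smul, smul_eq_mul, hdnorm, mul_one] at h0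
    exact h0
  have hmin_pos : 0 < lammin := by
    obtain ⟨w, hwne, hw⟩ := hminEig
    have h0 := hS.dotProduct_mulVec_pos hwne
    simp only [star_trivial, hw, dotProduct_smul, smul_eq_mul] at h0
    have hww : 0 < w ⬝ᵥ w := by
      rcases lt_or_eq_of_le (Finset.sum_nonneg fun i _ => mul_self_nonneg (w i) :
        (0:ℝ) ≤ w ⬝ᵥ w) with h | h
      · exact h
      · exact absurd (dotProduct_self_eq_zero.mp h.symm) hwne
    nlinarith
  have hmax_pos : 0 < lammax := by
    obtain ⟨w, hwne, hw⟩ := hmaxEig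
    have h0 := hS.dotProduct_mulVec_pos hwne
    simp only [star_trivial, hw, dotProduct_smul, smul_eq_mul] at h0
    have hww : 0 < w ⬝ᵥ w := by
      rcases lt_or_eq_of_le (Finset.sum_nonneg fun i _ => mul_self_nonneg (w i) :
        (0:ℝ) ≤ w ⬝ᵥ w) with h | h
      · exact h
      · exact absurd (dotProduct_self_eq_zero.mp h.symm) hwne
    nlinarith
  -- value at the candidate minimizer
  have hqstar : dstar ⬝ᵥ (S *ᵥ dstar) = lamstar := by
    rw [hd, dotProduct_smul, smul_eq_mul, hdnorm, mul_one]
  have hLHS : Dp S (1 + (lamstar - 1) • Matrix.vecMulVec dstar dstar)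
      = ell lamstar + S.trace := by
    rw [Dp_one_add S hstar_pos hdnorm, hqstar]
    unfold ell
    field_simp
    ring
  intro M hM
  obtain ⟨α, d, hα, hdo, hMeq⟩ := hM
  set a := α 0 with ha
  set v := d 0 with hv
  have hvnorm : v ⬝ᵥ v = 1 := by simpa using hdo 0 0
  have hMeq' : M = 1 + (a - 1) • Matrix.vecMulVec v v := by
    rw [hMeq]
    congr 1
    rw [Fin.sum_univ_one]
  have ha_pos : 0 < a := hα 0
  set q := v ⬝ᵥ (S *ᵥ v) with hq
  have hvne : v ≠ 0 := by
    intro h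
    rw [h] at hvnorm
    simp at hvnorm
  have hq_pos : 0 < q := by
    have h0 := hS.dotProduct_mulVec_pos hvne
    simpa [star_trivial, hq] using h0
  obtain ⟨hql, hqu⟩ := rayleigh_bounds hS hbounds hvnorm
  have hRHS : Dp S M = Real.log a + (S.trace + (a⁻¹ - 1) * q) := by
    rw [hMeq', Dp_one_add S ha_pos hvnorm]
  rw [hLHS, hRHS]
  -- step 1: log a + (a⁻¹ - 1) q ≥ ell q
  have hstep1 : ell q ≤ Real.log a + (a⁻¹ - 1) * q := by
    have hqa : 0 < q / a := div_pos hq_pos ha_pos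
    have h1 : ell (q / a) ≤ 0 := ell_nonpos hqa
    have h2 : Real.log (q / a) = Real.log q - Real.log a := Real.log_div hq_pos.ne' ha_pos.ne'
    unfold ell at h1 ⊢
    rw [h2] at h1
    have h3 : (a⁻¹ - 1) * q = q / a - q := by field_simp
    linarith
  -- step 2: ell lamstar ≤ ell q
  have hstep2 : ell lamstar ≤ ell q := by
    rcases le_total q 1 with hq1 | hq1
    · have := ell_mono hmin_pos hql hq1
      rw [hstarmin]
      exact le_trans (min_le_left _ _) this
    · have := ell_anti hq1 hqu
      rw [hstarmin]
      exact le_trans (min_le_right _ _) this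
  linarith
end

section
/- Let S be a real symmetric positive definite n×n matrix with eigenvalues λ_1,…,λ_n (listed with multiplicity) ranked in increasing ℓ-order, i.e. ℓ(λ_1) ≤ ⋯ ≤ ℓ(λ_n). Then for every 1 ≤ k ≤ n and every orthonormal family d_1,…,d_k in ℝ^n, Σ_{i=1}^k ℓ(d_iᵀ S d_i) ≥ Σ_{i=1}^k ℓ(λ_i). -/
open Matrix

lemma ell_concave : ConcaveOn ℝ (Set.Ioi (0:ℝ)) ell := by
  have h1 : ConcaveOn ℝ (Set.Ioi (0:ℝ)) Real.log := strictConcaveOn_log_Ioi.concaveOn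
  have h2 : ConcaveOn ℝ (Set.Ioi (0:ℝ)) (fun x : ℝ => -x + 1) :=
    ((convexOn_id (convex_Ioi (0:ℝ))).neg).add_const 1
  have h3 := h1.add h2
  have he : ell = fun x : ℝ => Real.log x + (-x + 1) := by
    funext x; simp [ell]; ring
  rw [he]; exact h3

lemma sum_castLE {n k : ℕ} (hkn : k ≤ n) (g : Fin n → ℝ) :
    ∑ i : Fin k, g (Fin.castLE hkn i)
      = ∑ j : Fin n, (if (j : ℕ) < k then (1:ℝ) else 0) * g j := by
  have h1 : ∀ j : Fin n, (if (j : ℕ) < k then (1:ℝ) else 0) * g j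
      = if (j : ℕ) < k then g j else 0 := by intro j; split <;> simp
  simp_rw [h1]
  rw [← Finset.sum_filter]
  refine (Finset.sum_bij' (fun (i : Fin k) _ => Fin.castLE hkn i)
    (fun (j : Fin n) hj => ⟨j.1, (Finset.mem_filter.mp hj).2⟩) ?_ ?_ ?_ ?_ ?_)
  · intro a _; simp [Fin.castLE]
  · intro a ha; simp
  · intro a _; rfl
  · intro a _; rfl
  · intro a _; rfl

theorem stmt_12 {n : ℕ} (S : Matrix (Fin n) (Fin n) ℝ) (hS : S.PosDef)
    (lam : Fin n → ℝ) (e : Fin n → Fin n → ℝ)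
    (heig : ∀ i, S *ᵥ e i = lam i • e i)
    (horthe : ∀ i j, e i ⬝ᵥ e j = if i = j then (1 : ℝ) else 0)
    (hord : ∀ i j : Fin n, i ≤ j → ell (lam i) ≤ ell (lam j))
    (k : ℕ) (hk1 : 1 ≤ k) (hkn : k ≤ n)
    (d : Fin k → Fin n → ℝ)
    (horthd : ∀ i j, d i ⬝ᵥ d j = if i = j then (1 : ℝ) else 0) :
    ∑ i : Fin k, ell (lam (Fin.castLE hkn i)) ≤ ∑ i : Fin k, ell (d i ⬝ᵥ S *ᵥ d i) := by
  classical
  set E : Matrix (Fin n) (Fin n) ℝ := Matrix.of e with hE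
  set D : Matrix (Fin k) (Fin n) ℝ := Matrix.of d with hD
  have hEEt : E * Eᵀ = 1 := by
    ext i j
    simpa [hE, Matrix.mul_apply, Matrix.one_apply, dotProduct] using horthe i j
  have hDDt : D * Dᵀ = 1 := by
    ext i j
    simpa [hD, Matrix.mul_apply, Matrix.one_apply, dotProduct] using horthd i j
  have hEtE : Eᵀ * E = 1 := mul_eq_one_comm.mp hEEt
  -- eigenvalues are positive
  have hlam : ∀ j, 0 < lam j := by
    intro j
    have hne : e j ≠ 0 := by
      intro h
      have := horthe j j
      simp [h] at this
    have hpos := hS.dotProduct_mulVec_pos hne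
    rw [heig j] at hpos
    have : star (e j) ⬝ᵥ (lam j • e j) = lam j * (e j ⬝ᵥ e j) := by
      simp [dotProduct, Finset.mul_sum]
      exact Finset.sum_congr rfl fun x _ => by ring
    rw [this, horthe j j] at hpos
    simpa using hpos
  -- spectral decomposition
  have hSE : S * Eᵀ = Eᵀ * Matrix.diagonal lam := by
    ext a j
    have h := congrFun (heig j) a
    simp [Matrix.mulVec, dotProduct] at h
    simp [Matrix.mul_apply, Matrix.diagonal, Matrix.transpose_apply, hE]
    rw [h]; ring
  have hSdec : S = Eᵀ * Matrix.diagonal lam * E := by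
    calc S = S * (Eᵀ * E) := by rw [hEtE, Matrix.mul_one]
    _ = (S * Eᵀ) * E := by rw [Matrix.mul_assoc]
    _ = Eᵀ * Matrix.diagonal lam * E := by rw [hSE]
  set G : Matrix (Fin k) (Fin n) ℝ := D * Eᵀ with hG
  have hGGt : G * Gᵀ = 1 := by
    rw [hG, Matrix.transpose_mul, Matrix.transpose_transpose,
      Matrix.mul_assoc, ← Matrix.mul_assoc Eᵀ, hEtE, Matrix.one_mul, hDDt]
  set c : Fin k → Fin n → ℝ := fun i j => (G i j) ^ 2 with hc
  -- quadratic form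
  have hquad : ∀ i, d i ⬝ᵥ S *ᵥ d i = ∑ j, c i j * lam j := by
    intro i
    have h1 : d i ⬝ᵥ S *ᵥ d i = (D * S * Dᵀ) i i := by
      simp [Matrix.mul_apply, Matrix.mulVec, dotProduct, Finset.mul_sum,
        Finset.sum_mul, hD]
      rw [Finset.sum_comm]
      apply Finset.sum_congr rfl; intro a _
      apply Finset.sum_congr rfl; intro b _
      ring
    have h2 : D * S * Dᵀ = G * Matrix.diagonal lam * Gᵀ := by
      rw [hSdec, hG, Matrix.transpose_mul, Matrix.transpose_transpose]
      simp only [Matrix.mul_assoc]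
    rw [h1, h2, Matrix.mul_apply]
    apply Finset.sum_congr rfl; intro j _
    rw [Matrix.mul_diagonal]
    simp [hc, Matrix.transpose_apply]; ring
  have hc_nonneg : ∀ i j, 0 ≤ c i j := fun i j => sq_nonneg _
  have hrow : ∀ i, ∑ j, c i j = 1 := by
    intro i
    have h := Matrix.ext_iff.mpr hGGt i i
    simp [Matrix.mul_apply, Matrix.one_apply] at h
    rw [← h]
    apply Finset.sum_congr rfl; intro j _
    simp [hc]; ring
  -- column sums ≤ 1 via projection
  set P : Matrix (Fin n) (Fin n) ℝ := Gᵀ * G with hP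
  have hP2 : P * P = P := by
    rw [hP, Matrix.mul_assoc, ← Matrix.mul_assoc G, hGGt, Matrix.one_mul]
  have hPsymm : ∀ a b, P a b = P b a := by
    intro a b
    simp [hP, Matrix.mul_apply, Matrix.transpose_apply, mul_comm]
  set t : Fin n → ℝ := fun j => ∑ i, c i j with ht
  have htP : ∀ j, t j = P j j := by
    intro j
    simp [ht, hP, Matrix.mul_apply, Matrix.transpose_apply, hc]
    apply Finset.sum_congr rfl; intro i _; ring
  have ht_nonneg : ∀ j, 0 ≤ t j := fun j => Finset.sum_nonneg fun i _ => hc_nonneg i j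
  have ht_le : ∀ j, t j ≤ 1 := by
    intro j
    have h1 : P j j = ∑ i, (P i j) ^ 2 := by
      have h := Matrix.ext_iff.mpr hP2 j j
      rw [Matrix.mul_apply] at h
      rw [← h]
      apply Finset.sum_congr rfl; intro i _
      rw [hPsymm j i]; ring
    have h2 : (P j j) ^ 2 ≤ ∑ i, (P i j) ^ 2 :=
      Finset.single_le_sum (fun i _ => sq_nonneg (P i j)) (Finset.mem_univ j)
    rw [htP j]
    nlinarith [h1, h2]
  have htsum : ∑ j, t j = (k : ℝ) := by
    rw [ht]
    rw [Finset.sum_comm]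
    simp [hrow]
  -- Jensen
  have hjensen : ∀ i, ∑ j, c i j * ell (lam j) ≤ ell (d i ⬝ᵥ S *ᵥ d i) := by
    intro i
    rw [hquad i]
    have := ell_concave.le_map_sum (t := Finset.univ) (w := c i) (p := lam)
      (fun j _ => hc_nonneg i j) (hrow i) (fun j _ => hlam j)
    simpa [smul_eq_mul] using this
  -- rearrangement
  set chi : Fin n → ℝ := fun j => if (j : ℕ) < k then (1:ℝ) else 0 with hchi
  have hchisum : ∑ j, chi j = (k : ℝ) := by
    have h := sum_castLE hkn (fun _ => (1:ℝ))
    simp only [mul_one] at h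
    rw [hchi, ← h]
    simp
  set m : Fin n := ⟨k - 1, by omega⟩ with hm
  set a : Fin n → ℝ := fun j => ell (lam j) with ha
  have hstep : ∑ j, chi j * a j ≤ ∑ j, t j * a j := by
    have hterm : ∀ j ∈ Finset.univ, (t j - chi j) * a m ≤ (t j - chi j) * a j := by
      intro j _
      by_cases hj : (j : ℕ) < k
      · have hcoef : t j - chi j ≤ 0 := by
          have h1 := ht_le j
          simp only [hchi, hj, if_pos]
          linarith
        have hax : a j ≤ a m := hord j m (by rw [Fin.le_def]; simp [hm]; omega)
        exact mul_le_mul_of_nonpos_left hax hcoef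
      · have hcoef : 0 ≤ t j - chi j := by
          have h1 := ht_nonneg j
          simp only [hchi, hj, if_neg, if_false]
          linarith
        have hax : a m ≤ a j := hord m j (by rw [Fin.le_def]; simp [hm]; omega)
        exact mul_le_mul_of_nonneg_left hax hcoef
    have h0 : ∑ j, (t j - chi j) * a m = 0 := by
      rw [← Finset.sum_mul, Finset.sum_sub_distrib, htsum, hchisum]
      ring
    have h1 := Finset.sum_le_sum hterm
    rw [h0] at h1
    have h2 : ∑ j, (t j - chi j) * a j = ∑ j, t j * a j - ∑ j, chi j * a j := by
      rw [← Finset.sum_sub_distrib]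
      exact Finset.sum_congr rfl fun j _ => by ring
    linarith
  have hswap : ∑ j, t j * a j = ∑ i : Fin k, ∑ j, c i j * a j := by
    have h1 : ∑ j, t j * a j = ∑ j, ∑ i : Fin k, c i j * a j :=
      Finset.sum_congr rfl fun j _ => by rw [ht]; exact Finset.sum_mul _ _ _
    rw [h1, Finset.sum_comm]
  calc ∑ i : Fin k, ell (lam (Fin.castLE hkn i))
      = ∑ j, chi j * a j := by rw [hchi, ha]; simpa using sum_castLE hkn (fun j => ell (lam j))
    _ ≤ ∑ j, t j * a j := hstep
    _ = ∑ i : Fin k, ∑ j, c i j * a j := hswap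
    _ ≤ ∑ i : Fin k, ell (d i ⬝ᵥ S *ᵥ d i) := Finset.sum_le_sum fun i _ => hjensen i
end
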